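/- Let U = {U_i}_{i∈I} be a cover of a finite poset X by lower sets, let x ∈ X, let J = { i ∈ I : x ∈ U_i } and let C be the connected component of W_J containing x. Consider the relation R ⊆ X × Ĥ(U)ᵒᵖ given by z R (J',C') iff z ∈ C'. Then the closure, in Ĥ(U)ᵒᵖ, of R(F_x) = { (J',C') : some z ≥ x lies in C' } equals the set F_{(J,C)} of all elements of Ĥ(U)ᵒᵖ that are ≥ (J,C); in particular this closure has a minimum element, namely (J,C). -/

import Mathlib

/-- The comparability relation inside a subset `U` of a poset. -/
def posetCompRel {X : Type*} [PartialOrder X] (U : Set X) (a b : X) : Prop :=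
  a ∈ U ∧ b ∈ U ∧ (a ≤ b ∨ b ≤ a)

/-- `C` is a connected component of `U` (w.r.t. the equivalence relation generated by
comparability inside `U`). -/
def IsComponent {X : Type*} [PartialOrder X] (U C : Set X) : Prop :=
  ∃ u ∈ U, C = {z | z ∈ U ∧ Relation.EqvGen (posetCompRel U) u z}

/-- A pair `(J, C)` is a valid element of the completion poset `Ĥ(U)` if
`W_J = ⋂_{i ∈ J} U_i` is nonempty and `C` is a connected component of `W_J`. -/
def ValidPair {X I : Type*} [PartialOrder X] (Uc : I → Set X)
    (p : Set I × Set X) : Prop :=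
  (⋂ i ∈ p.1, Uc i).Nonempty ∧ IsComponent (⋂ i ∈ p.1, Uc i) p.2

/-- The order of the completion poset: `(J, C) ≤ (J', C')` iff `J ⊆ J'` and `C' ⊆ C`. -/
def cylLeP {X I : Type*} (p q : Set I × Set X) : Prop :=
  p.1 ⊆ q.1 ∧ q.2 ⊆ p.2


lemma posetCompRel_mono {X : Type*} [PartialOrder X] {U V : Set X} (h : U ⊆ V) :
    ∀ a b, posetCompRel U a b → posetCompRel V a b :=
  fun _ _ ⟨ha, hb, hab⟩ => ⟨h ha, h hb, hab⟩

/-- For `x ∈ X`, `J = { i : x ∈ U_i }` and `C` the component of `W_J` containing `x`,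
the closure in `Ĥ(U)ᵒᵖ` of `R(F_x)` (for the relation `z R (J',C')` iff `z ∈ C'`)
equals the up-set `F_{(J,C)}` of `(J,C)` in `Ĥ(U)ᵒᵖ`, i.e. the set of elements below
`(J,C)` in `Ĥ(U)`; in particular it has minimum `(J,C)` (which is a valid pair). -/
theorem stmt17 {X I : Type*} [PartialOrder X] [Fintype X] (Uc : I → Set X)
    (hl : ∀ i, IsLowerSet (Uc i)) (hcov : ∀ x : X, ∃ i, x ∈ Uc i)
    (x : X) (J : Set I) (hJ : J = {i : I | x ∈ Uc i}) (C : Set X)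
    (hC : C = {z : X | z ∈ ⋂ i ∈ J, Uc i ∧
        Relation.EqvGen (posetCompRel (⋂ i ∈ J, Uc i)) x z}) :
    ({p : Set I × Set X | ValidPair Uc p ∧
        ∃ q : Set I × Set X, ValidPair Uc q ∧ (∃ z : X, x ≤ z ∧ z ∈ q.2) ∧
          cylLeP p q} =
      {p : Set I × Set X | ValidPair Uc p ∧ cylLeP p (J, C)}) ∧
    ValidPair Uc (J, C) := by
  have hxW : x ∈ ⋂ i ∈ J, Uc i := by
    simp only [Set.mem_iInter]
    intro i hi
    rw [hJ] at hi
    exact hi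
  have hvalid : ValidPair Uc (J, C) := ⟨⟨x, hxW⟩, ⟨x, hxW, hC⟩⟩
  refine ⟨?_, hvalid⟩
  ext p
  simp only [Set.mem_setOf_eq]
  constructor
  · rintro ⟨hp, q, hq, ⟨z, hxz, hzq⟩, hpq⟩
    refine ⟨hp, ?_, ?_⟩
    · -- p.1 ⊆ J
      intro i hi
      have hiq : i ∈ q.1 := hpq.1 hi
      obtain ⟨u, hu, hq2⟩ := hq.2
      have hzWq : z ∈ ⋂ i ∈ q.1, Uc i := by
        rw [hq2] at hzq; exact hzq.1
      have : z ∈ Uc i := by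
        simp only [Set.mem_iInter] at hzWq; exact hzWq i hiq
      rw [hJ]
      exact hl i hxz this
    · -- C ⊆ p.2
      have hp1J : p.1 ⊆ J := by
        intro i hi
        have hiq : i ∈ q.1 := hpq.1 hi
        obtain ⟨u, hu, hq2⟩ := hq.2
        have hzWq : z ∈ ⋂ i ∈ q.1, Uc i := by
          rw [hq2] at hzq; exact hzq.1
        have : z ∈ Uc i := by
          simp only [Set.mem_iInter] at hzWq; exact hzWq i hiq
        rw [hJ]
        exact hl i hxz this
      have hWsub : (⋂ i ∈ J, Uc i) ⊆ ⋂ i ∈ p.1, Uc i := by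
        intro y hy
        simp only [Set.mem_iInter] at hy ⊢
        exact fun i hi => hy i (hp1J hi)
      obtain ⟨u', hu', hp2⟩ := hp.2
      have hzp : z ∈ p.2 := hpq.2 hzq
      have hzWp : z ∈ ⋂ i ∈ p.1, Uc i := by
        rw [hp2] at hzp; exact hzp.1
      have huz : Relation.EqvGen (posetCompRel (⋂ i ∈ p.1, Uc i)) u' z := by
        rw [hp2] at hzp; exact hzp.2
      have hxWp : x ∈ ⋂ i ∈ p.1, Uc i := hWsub hxW
      have hzx : Relation.EqvGen (posetCompRel (⋂ i ∈ p.1, Uc i)) z x :=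
        Relation.EqvGen.rel _ _ ⟨hzWp, hxWp, Or.inr hxz⟩
      intro c hc
      rw [hC] at hc
      have hcWp : c ∈ ⋂ i ∈ p.1, Uc i := hWsub hc.1
      have hxc : Relation.EqvGen (posetCompRel (⋂ i ∈ p.1, Uc i)) x c :=
        Relation.EqvGen.mono (posetCompRel_mono hWsub) _ _ hc.2
      rw [hp2]
      exact ⟨hcWp, (huz.trans _ _ _ hzx).trans _ _ _ hxc⟩
  · rintro ⟨hp, hple⟩
    refine ⟨hp, (J, C), hvalid, ⟨x, le_refl x, ?_⟩, hple⟩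
    rw [hC]
    exact ⟨hxW, Relation.EqvGen.refl x⟩
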